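/- arXiv:1701.08204 — 3 statements merged into one kernel-verified Lean document; each statement's English description precedes it below -/
import Mathlib

section
/- Let μ, ν be probability measures on ℝ with finite first moments, and let f be a C² function with compact support. Then ∫ f dμ − ∫ f dν = ∫_ℝ f''(K)(c_μ(K) − c_ν(K)) dK, where c_μ(K) = ∫(x−K)^+ dμ and c_ν(K) = ∫(x−K)^+ dν. -/
open MeasureTheory Function Set

private lemma key_rep {f : ℝ → ℝ} (hf : ContDiff ℝ 2 f)
    {r : ℝ} (hr : tsupport f ⊆ Icc (-r) r) (x : ℝ) :
    f x = ∫ K, deriv (deriv f) K * max (x - K) 0 := by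
  have hd1 : Differentiable ℝ f := hf.differentiable (by norm_num)
  have hf1 : ContDiff ℝ 1 (deriv f) := (contDiff_succ_iff_deriv.mp (by exact_mod_cast hf)).2.2
  have hd2 : Differentiable ℝ (deriv f) := hf1.differentiable (by norm_num)
  have hc2 : Continuous (deriv (deriv f)) := (contDiff_one_iff_deriv.mp hf1).2
  have hs1 : support (deriv f) ⊆ Icc (-r) r := support_deriv_subset.trans hr
  have hts1 : tsupport (deriv f) ⊆ Icc (-r) r := closure_minimal hs1 isClosed_Icc
  have hs2 : support (deriv (deriv f)) ⊆ Icc (-r) r := support_deriv_subset.trans hts1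
  have hfz : ∀ y, y < -r → f y = 0 := by
    intro y hy
    by_contra h
    exact absurd ((subset_tsupport f).trans hr (by exact h)).1 (by linarith)
  have hf1z : ∀ y, y < -r → deriv f y = 0 := by
    intro y hy
    by_contra h
    exact absurd (hs1 (by exact h)).1 (by linarith)
  have hf2z : ∀ y, y < -r → deriv (deriv f) y = 0 := by
    intro y hy
    by_contra h
    exact absurd (hs2 (by exact h)).1 (by linarith)
  set a := min x (-r) - 1 with ha
  have ha_x : a < x := by have := min_le_left x (-r); simp only [ha]; linarith
  have ha_r : a < -r := by have := min_le_right x (-r); simp only [ha]; linarith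
  -- integration by parts
  have hibp : ∫ K in a..x, (x - K) * deriv (deriv f) K = f x := by
    have h := intervalIntegral.integral_mul_deriv_eq_deriv_mul
      (u := fun K => x - K) (u' := fun _ => -1) (v := deriv f) (v' := deriv (deriv f))
      (a := a) (b := x)
      (fun K _ => by simpa using ((hasDerivAt_id K).const_sub x))
      (fun K _ => (hd2 K).hasDerivAt)
      intervalIntegrable_const
      (hc2.intervalIntegrable a x)
    rw [h]
    have h2 : ∫ K in a..x, (-1 : ℝ) * deriv f K = -(f x - f a) := by
      rw [intervalIntegral.integral_const_mul]
      rw [intervalIntegral.integral_deriv_eq_sub (fun y _ => hd1 y)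
        (hf1.continuous.intervalIntegrable a x)]
      ring
    rw [h2, hfz a ha_r, hf1z a ha_r]
    ring
  have hss : support (fun K => deriv (deriv f) K * max (x - K) 0) ⊆ Ioc a x := by
    intro K hK
    by_contra hKn
    rw [mem_Ioc, not_and_or] at hKn
    apply hK
    show deriv (deriv f) K * max (x - K) 0 = 0
    rcases hKn with h | h
    · push_neg at h
      rw [hf2z K (by linarith), zero_mul]
    · push_neg at h
      rw [max_eq_right (by linarith), mul_zero]
  rw [← intervalIntegral.integral_eq_integral_of_support_subset hss]
  rw [intervalIntegral.integral_congr (g := fun K => (x - K) * deriv (deriv f) K)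
    (fun K hK => by
      rw [uIcc_of_le ha_x.le, mem_Icc] at hK
      rw [max_eq_left (by linarith [hK.2]), mul_comm]), hibp]

private lemma key_int (μ : Measure ℝ) [IsProbabilityMeasure μ]
    (hμ : Integrable (fun x : ℝ => |x|) μ) {g : ℝ → ℝ} (hg : Continuous g)
    {r : ℝ} (hr0 : 0 ≤ r) (hgs : support g ⊆ Icc (-r) r) :
    Integrable (fun p : ℝ × ℝ => g p.2 * max (p.1 - p.2) 0) (μ.prod volume) := by
  have hgc : HasCompactSupport g :=
    HasCompactSupport.intro isCompact_Icc (fun y hy => by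
      by_contra h; exact hy (hgs h))
  have hgi : Integrable (fun K => |g K|) volume :=
    (hg.abs.integrable_of_hasCompactSupport hgc.abs)
  have hbi : Integrable (fun p : ℝ × ℝ => (|p.1| + r) * |g p.2|) (μ.prod volume) :=
    Integrable.mul_prod (hμ.add (integrable_const r)) hgi
  refine hbi.mono' ?_ ?_
  · exact (((hg.comp continuous_snd).mul
      ((continuous_fst.sub continuous_snd).max continuous_const)).aestronglyMeasurable)
  · refine Filter.Eventually.of_forall fun p => ?_
    by_cases h : g p.2 = 0
    · simp [h, abs_nonneg, add_nonneg (abs_nonneg p.1) hr0]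
    · have hp : p.2 ∈ Icc (-r) r := hgs h
      rw [mem_Icc] at hp
      have h1 : max (p.1 - p.2) 0 ≤ |p.1| + r := by
        rcases max_cases (p.1 - p.2) 0 with ⟨he, _⟩ | ⟨he, _⟩ <;>
          [skip; skip] <;> rw [he] <;> cases abs_cases p.1 <;> [linarith; linarith; linarith; linarith]
      have h0 : (0:ℝ) ≤ max (p.1 - p.2) 0 := le_max_right _ _
      rw [Real.norm_eq_abs, abs_mul, abs_of_nonneg h0, mul_comm]
      exact mul_le_mul_of_nonneg_right h1 (abs_nonneg _)

private lemma one_side (μ : Measure ℝ) [IsProbabilityMeasure μ]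
    (hμ : Integrable (fun x : ℝ => |x|) μ)
    {f : ℝ → ℝ} (hf : ContDiff ℝ 2 f) (hsupp : HasCompactSupport f)
    {r : ℝ} (hr0 : 0 ≤ r) (hr : tsupport f ⊆ Icc (-r) r) :
    (∫ x, f x ∂μ) = (∫ K, deriv (deriv f) K * ∫ x, max (x - K) 0 ∂μ) ∧
      Integrable (fun K => deriv (deriv f) K * ∫ x, max (x - K) 0 ∂μ) volume := by
  have hf1 : ContDiff ℝ 1 (deriv f) := (contDiff_succ_iff_deriv.mp (by exact_mod_cast hf)).2.2
  have hc2 : Continuous (deriv (deriv f)) := (contDiff_one_iff_deriv.mp hf1).2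
  have hs2 : support (deriv (deriv f)) ⊆ Icc (-r) r :=
    support_deriv_subset.trans (closure_minimal (support_deriv_subset.trans hr) isClosed_Icc)
  have hF : Integrable (fun p : ℝ × ℝ => deriv (deriv f) p.2 * max (p.1 - p.2) 0)
      (μ.prod volume) := key_int μ hμ hc2 hr0 hs2
  have heq : (fun K => ∫ x, deriv (deriv f) K * max (x - K) 0 ∂μ)
      = fun K => deriv (deriv f) K * ∫ x, max (x - K) 0 ∂μ :=
    funext fun K => integral_const_mul _ _
  constructor
  · calc ∫ x, f x ∂μ = ∫ x, (∫ K, deriv (deriv f) K * max (x - K) 0) ∂μ :=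
          integral_congr_ae (Filter.Eventually.of_forall fun x => key_rep hf hr x)
      _ = ∫ K, (∫ x, deriv (deriv f) K * max (x - K) 0 ∂μ) :=
          integral_integral_swap (f := fun x K => deriv (deriv f) K * max (x - K) 0) hF
      _ = ∫ K, deriv (deriv f) K * ∫ x, max (x - K) 0 ∂μ := by rw [heq]
  · have := hF.swap.integral_prod_left
    rw [show ((fun p : ℝ × ℝ => deriv (deriv f) p.2 * max (p.1 - p.2) 0) ∘ Prod.swap)
      = fun p : ℝ × ℝ => deriv (deriv f) p.1 * max (p.2 - p.1) 0 from rfl] at this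
    rwa [show (fun K => ∫ x, deriv (deriv f) K * max (x - K) 0 ∂μ)
      = fun K => deriv (deriv f) K * ∫ x, max (x - K) 0 ∂μ from heq] at this

theorem stmt_3 (μ ν : Measure ℝ) [IsProbabilityMeasure μ] [IsProbabilityMeasure ν]
    (hμ : Integrable (fun x : ℝ => |x|) μ) (hν : Integrable (fun x : ℝ => |x|) ν)
    (f : ℝ → ℝ) (hf : ContDiff ℝ 2 f) (hsupp : HasCompactSupport f) :
    (∫ x, f x ∂μ) - (∫ x, f x ∂ν)
      = ∫ K : ℝ, deriv (deriv f) K *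
          ((∫ x, max (x - K) 0 ∂μ) - (∫ x, max (x - K) 0 ∂ν)) := by
  obtain ⟨r0, hr0⟩ := hsupp.isBounded.subset_closedBall 0
  have hr : tsupport f ⊆ Icc (-(max r0 0)) (max r0 0) := by
    refine hr0.trans ?_
    rw [Real.closedBall_eq_Icc]
    apply Icc_subset_Icc <;> simp [le_max_left, le_max_right] <;> linarith [le_max_left r0 0]
  have h1 := one_side μ hμ hf hsupp (le_max_right r0 0) hr
  have h2 := one_side ν hν hf hsupp (le_max_right r0 0) hr
  rw [h1.1, h2.1, ← integral_sub h1.2 h2.2]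
  congr 1
  funext K
  ring
end

section
/- Let μ and (μⁿ)_{n≥1} be probability measures on ℝ with uniformly bounded first moments, and suppose the call price functions c_n(K) := ∫(x−K)^+ dμⁿ converge to c(K) := ∫(x−K)^+ dμ for every K in a dense subset D of ℝ. Then ∫ f dμⁿ → ∫ f dμ for every C² function f with compact support. -/
open MeasureTheory Filter

theorem stmt_4 (μ : Measure ℝ) (μs : ℕ → Measure ℝ)
    [IsProbabilityMeasure μ] [∀ n, IsProbabilityMeasure (μs n)]
    (hμ : Integrable (fun x : ℝ => |x|) μ)
    (hμs : ∀ n, Integrable (fun x : ℝ => |x|) (μs n))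
    (M : ℝ) (hbnd : ∀ n, (∫ x, |x| ∂(μs n)) ≤ M)
    (D : Set ℝ) (hD : Dense D)
    (hconv : ∀ K ∈ D,
      Tendsto (fun n => ∫ x, max (x - K) 0 ∂(μs n)) atTop
        (nhds (∫ x, max (x - K) 0 ∂μ)))
    (f : ℝ → ℝ) (hf : ContDiff ℝ 2 f) (hsupp : HasCompactSupport f) :
    Tendsto (fun n => ∫ x, f x ∂(μs n)) atTop (nhds (∫ x, f x ∂μ)) := by
  -- setup: bound on support
  obtain ⟨R, hR0, hR⟩ : ∃ R : ℝ, 0 ≤ R ∧ tsupport f ⊆ Set.Icc (-R) R := by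
    obtain ⟨r, hr⟩ := hsupp.isCompact.isBounded.subset_closedBall 0
    exact ⟨max r 0, le_max_right _ _, fun x hx => by
      have := hr hx
      rw [Real.closedBall_eq_Icc] at this
      constructor
      · have := this.1; simp only [zero_sub] at this
        calc -(max r 0) ≤ -r := by simp [neg_le_neg_iff, le_max_left]
          _ ≤ x := this
      · have := this.2; simp only [zero_add] at this
        exact this.trans (le_max_left _ _)⟩
  -- derivatives
  have hf2 : ContDiff ℝ (1 + 1) f := by
    rw [show ((1 : WithTop ℕ∞) + 1) = 2 from rfl]; exact hf
  have hfd : Differentiable ℝ f := hf.differentiable (by norm_num)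
  have hf1 : ContDiff ℝ 1 (deriv f) := (contDiff_succ_iff_deriv.mp hf2).2.2
  have hf'd : Differentiable ℝ (deriv f) := hf1.differentiable (by norm_num)
  set g : ℝ → ℝ := deriv (deriv f) with hg_def
  have hg_cont : Continuous g := hf1.continuous_deriv le_rfl
  have hg_supp : HasCompactSupport g := hsupp.deriv.deriv
  have hg_zero : ∀ K : ℝ, K ∉ Set.Icc (-R) R → g K = 0 := by
    intro K hK
    apply image_eq_zero_of_notMem_tsupport
    intro hKt
    have h1 : tsupport g ⊆ tsupport (deriv f) :=
      closure_minimal support_deriv_subset (isClosed_tsupport _)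
    have h2 : tsupport (deriv f) ⊆ tsupport f :=
      closure_minimal support_deriv_subset (isClosed_tsupport f)
    exact hK (hR (h2 (h1 hKt)))
  -- key pointwise identity
  have keyA : ∀ x : ℝ, f x = ∫ K, g K * max (x - K) 0 := by
    intro x
    set a := min (-R - 1) x with ha_def
    have hax : a ≤ x := min_le_right _ _
    have haR : a ≤ -R - 1 := min_le_left _ _
    have ha_not : a ∉ Set.Icc (-R) R := by
      intro h; linarith [h.1]
    have hfa : f a = 0 := image_eq_zero_of_notMem_tsupport (fun h => ha_not (hR h))
    have hf'a : deriv f a = 0 := by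
      apply image_eq_zero_of_notMem_tsupport
      intro h
      exact ha_not (hR (closure_minimal support_deriv_subset (isClosed_tsupport f) h))
    have step1 : (∫ K, g K * max (x - K) 0) = ∫ K in Set.Ioc a x, g K * max (x - K) 0 := by
      symm
      apply setIntegral_eq_integral_of_forall_compl_eq_zero
      intro K hK
      rcases le_or_gt K x with hKx | hKx
      · have hKa : K ≤ a := by
          by_contra h
          exact hK ⟨lt_of_not_ge h, hKx⟩
        have : K ∉ Set.Icc (-R) R := by
          intro h; have := h.1; linarith [hKa.trans haR]
        rw [hg_zero K this, zero_mul]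
      · rw [max_eq_right (by linarith), mul_zero]
    have step2 : (∫ K in Set.Ioc a x, g K * max (x - K) 0)
        = ∫ K in a..x, (x - K) * g K := by
      rw [intervalIntegral.integral_of_le hax]
      apply setIntegral_congr_fun measurableSet_Ioc
      intro K hK
      show g K * max (x - K) 0 = (x - K) * g K
      rw [max_eq_left (by linarith [hK.2] : (0:ℝ) ≤ x - K), mul_comm]
    have step3 : (∫ K in a..x, (x - K) * g K) = f x := by
      have parts := intervalIntegral.integral_mul_deriv_eq_deriv_mul
        (u := fun s => x - s) (v := deriv f) (u' := fun _ => (-1 : ℝ)) (v' := g)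
        (a := a) (b := x)
        (fun s _ => (hasDerivAt_id s).const_sub x)
        (fun s _ => (hf'd s).hasDerivAt)
        intervalIntegrable_const (hg_cont.intervalIntegrable _ _)
      rw [parts, hf'a]
      have : (∫ s in a..x, (-1 : ℝ) * deriv f s) = -(f x - f a) := by
        simp only [neg_mul, one_mul]
        rw [intervalIntegral.integral_neg]
        congr 1
        exact intervalIntegral.integral_deriv_eq_sub (fun s _ => hfd s)
          ((hf.continuous_deriv (by norm_num)).intervalIntegrable _ _)
      rw [this, hfa]
      ring
    rw [step1, step2, step3]
  -- call integrability
  have call_int : ∀ (ν : Measure ℝ), IsProbabilityMeasure ν →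
      Integrable (fun x : ℝ => |x|) ν → ∀ K : ℝ,
      Integrable (fun x => max (x - K) 0) ν := by
    intro ν hνi hν K
    haveI := hνi
    apply Integrable.mono' (hν.add (integrable_const |K|))
    · exact ((continuous_id.sub continuous_const).max continuous_const).aestronglyMeasurable
    · filter_upwards with x
      rw [Real.norm_eq_abs, abs_of_nonneg (le_max_right _ _)]
      calc max (x - K) 0 ≤ |x - K| := max_le (le_abs_self _) (abs_nonneg _)
        _ ≤ |x| + |K| := abs_sub _ _
  -- Lipschitz property of call prices
  have lip : ∀ (ν : Measure ℝ), IsProbabilityMeasure ν →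
      Integrable (fun x : ℝ => |x|) ν → ∀ K K' : ℝ,
      |(∫ x, max (x - K) 0 ∂ν) - ∫ x, max (x - K') 0 ∂ν| ≤ |K' - K| := by
    intro ν hνi hν K K'
    haveI := hνi
    rw [← integral_sub (call_int ν hνi hν K) (call_int ν hνi hν K')]
    calc |∫ x, (max (x - K) 0 - max (x - K') 0) ∂ν|
        ≤ ∫ x, |max (x - K) 0 - max (x - K') 0| ∂ν := by
          simpa using norm_integral_le_integral_norm
            (μ := ν) (fun x => max (x - K) 0 - max (x - K') 0)
      _ ≤ ∫ _x, |K' - K| ∂ν := by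
          apply integral_mono
          · exact ((call_int ν hνi hν K).sub (call_int ν hνi hν K')).abs
          · exact integrable_const _
          · intro x
            calc |max (x - K) 0 - max (x - K') 0| ≤ |(x - K) - (x - K')| :=
                abs_max_sub_max_le_abs _ _ _
              _ = |K' - K| := by ring_nf
      _ = |K' - K| := by simp
  -- pointwise convergence of call prices everywhere
  have hconv_all : ∀ K : ℝ, Tendsto (fun n => ∫ x, max (x - K) 0 ∂(μs n)) atTop
      (nhds (∫ x, max (x - K) 0 ∂μ)) := by
    intro K
    rw [Metric.tendsto_atTop]
    intro ε hε
    obtain ⟨K', hK'D, hK'⟩ := hD.exists_dist_lt K (show (0:ℝ) < ε/3 by linarith)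
    rw [Real.dist_eq] at hK'
    obtain ⟨N, hN⟩ := (Metric.tendsto_atTop.mp (hconv K' hK'D)) (ε/3) (by linarith)
    refine ⟨N, fun n hn => ?_⟩
    rw [Real.dist_eq]
    have t1 : |(∫ x, max (x - K) 0 ∂μs n) - ∫ x, max (x - K) 0 ∂μ|
        ≤ |(∫ x, max (x - K) 0 ∂μs n) - ∫ x, max (x - K') 0 ∂μs n|
          + |(∫ x, max (x - K') 0 ∂μs n) - ∫ x, max (x - K') 0 ∂μ|
          + |(∫ x, max (x - K') 0 ∂μ) - ∫ x, max (x - K) 0 ∂μ| := by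
      have h1 := abs_sub_le (∫ x, max (x - K) 0 ∂μs n)
        (∫ x, max (x - K') 0 ∂μs n) (∫ x, max (x - K) 0 ∂μ)
      have h2 := abs_sub_le (∫ x, max (x - K') 0 ∂μs n)
        (∫ x, max (x - K') 0 ∂μ) (∫ x, max (x - K) 0 ∂μ)
      linarith
    have e1 := lip (μs n) inferInstance (hμs n) K K'
    have e2 := lip μ inferInstance hμ K' K
    have e3 := hN n hn
    rw [Real.dist_eq] at e3
    have hKK : |K' - K| < ε/3 := by rwa [abs_sub_comm]
    linarith
  -- Fubini representation
  have keyB : ∀ (ν : Measure ℝ), IsProbabilityMeasure ν →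
      Integrable (fun x : ℝ => |x|) ν →
      (∫ x, f x ∂ν) = ∫ K, g K * (∫ x, max (x - K) 0 ∂ν) := by
    intro ν hνi hν
    haveI := hνi
    have hprod : Integrable (fun p : ℝ × ℝ => g p.2 * max (p.1 - p.2) 0)
        (ν.prod volume) := by
      apply Integrable.mono' (Integrable.mul_prod (f := fun x => |x| + R)
        (g := fun K => |g K|) (hν.add (integrable_const R))
        ((hg_cont.abs.integrable_of_hasCompactSupport hg_supp.abs)))
      · exact ((hg_cont.comp continuous_snd).mul
          (((continuous_fst.sub continuous_snd).max continuous_const))).aestronglyMeasurable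
      · filter_upwards with p
        rw [Real.norm_eq_abs, abs_mul, abs_of_nonneg (le_max_right (p.1 - p.2) (0:ℝ))]
        by_cases hp : p.2 ∈ Set.Icc (-R) R
        · rw [mul_comm (|p.1| + R) _]
          apply mul_le_mul_of_nonneg_left _ (abs_nonneg _)
          calc max (p.1 - p.2) 0 ≤ |p.1 - p.2| := max_le (le_abs_self _) (abs_nonneg _)
            _ ≤ |p.1| + |p.2| := abs_sub _ _
            _ ≤ |p.1| + R := by
                apply add_le_add_right (abs_le.mpr ⟨hp.1, hp.2⟩)
        · rw [hg_zero p.2 hp]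
          simp
    calc (∫ x, f x ∂ν) = ∫ x, (∫ K, g K * max (x - K) 0) ∂ν :=
          integral_congr_ae (Eventually.of_forall fun x => keyA x)
      _ = ∫ K, (∫ x, g K * max (x - K) 0 ∂ν) :=
          integral_integral_swap hprod
      _ = ∫ K, g K * (∫ x, max (x - K) 0 ∂ν) := by
          congr 1
          ext K
          exact integral_const_mul _ _
  -- continuity of call price functions
  have call_cont : ∀ (ν : Measure ℝ), IsProbabilityMeasure ν →
      Integrable (fun x : ℝ => |x|) ν →
      Continuous (fun K => ∫ x, max (x - K) 0 ∂ν) := by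
    intro ν hνi hν
    apply LipschitzWith.continuous (K := 1)
    rw [lipschitzWith_iff_dist_le_mul]
    intro K K'
    simp only [NNReal.coe_one, one_mul, Real.dist_eq]
    have := lip ν hνi hν K K'
    rwa [abs_sub_comm K' K] at this
  -- rewrite using keyB
  have hrw : (fun n => ∫ x, f x ∂(μs n))
      = fun n => ∫ K, g K * (∫ x, max (x - K) 0 ∂(μs n)) :=
    funext fun n => keyB (μs n) inferInstance (hμs n)
  rw [hrw, keyB μ inferInstance hμ]
  -- dominated convergence
  apply tendsto_integral_of_dominated_convergence (fun K => |g K| * (M + |K|))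
  · intro n
    exact ((hg_cont.mul (call_cont (μs n) inferInstance (hμs n)))).aestronglyMeasurable
  · apply Continuous.integrable_of_hasCompactSupport
    · exact hg_cont.abs.mul (continuous_const.add continuous_abs)
    · exact hg_supp.abs.mul_right
  · intro n
    filter_upwards with K
    rw [Real.norm_eq_abs, abs_mul]
    apply mul_le_mul_of_nonneg_left _ (abs_nonneg _)
    have hnn : 0 ≤ ∫ x, max (x - K) 0 ∂(μs n) :=
      integral_nonneg fun x => le_max_right _ _
    rw [abs_of_nonneg hnn]
    calc (∫ x, max (x - K) 0 ∂(μs n)) ≤ ∫ x, |x| + |K| ∂(μs n) := by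
          apply integral_mono (call_int (μs n) inferInstance (hμs n) K)
            ((hμs n).add (integrable_const _))
          intro x
          calc max (x - K) 0 ≤ |x - K| := max_le (le_abs_self _) (abs_nonneg _)
            _ ≤ |x| + |K| := abs_sub _ _
      _ = (∫ x, |x| ∂(μs n)) + |K| := by
          rw [integral_add (hμs n) (integrable_const _)]
          simp
      _ ≤ M + |K| := by linarith [hbnd n]
  · filter_upwards with K
    exact (hconv_all K).const_mul _
end

section
/- Let μ, ν be probability measures on ℝ with ∫|x|^p dμ ≤ V and ∫|x|^p dν ≤ V for some p > 2. Then for every R > 0, |∫x² dμ − ∫x² dν| ≤ 2R·W(μ,ν) + 2V/R^{p−2}, where W is the Wasserstein-1 distance. Consequently, choosing R = W(μ,ν)^{−1/(p−1)}, one gets |∫x²dμ − ∫x²dν| ≤ C·W(μ,ν)^{(p−2)/(p−1)} for a constant C depending only on V. -/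
open MeasureTheory ProbabilityTheory Set


-- comp neg integrable
lemma aux_comp_neg {f : ℝ → ℝ} (hf : Integrable f (volume : Measure ℝ)) :
    Integrable (fun x => f (-x)) (volume : Measure ℝ) := by
  have A : MeasurableEmbedding (fun x : ℝ => -x) :=
    (Homeomorph.neg ℝ).isClosedEmbedding.measurableEmbedding
  rw [← Measure.map_neg_eq_self (volume : Measure ℝ)] at hf
  exact (A.integrable_map_iff).mp hf

-- Markov-type tail bounds for cdf
lemma aux_tail_left {p V : ℝ} (hp : 2 < p) (μ : Measure ℝ) [IsProbabilityMeasure μ]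
    (hint : Integrable (fun x : ℝ => |x| ^ p) μ) (hle : (∫ x, |x| ^ p ∂μ) ≤ V)
    {t : ℝ} (ht : 0 < t) : cdf μ (-t) ≤ V / t ^ p := by
  have hsub : Iic (-t) ⊆ {x : ℝ | t ^ p ≤ |x| ^ p} := by
    intro x hx
    simp only [mem_Iic] at hx
    have : t ≤ |x| := by
      rw [abs_of_nonpos (hx.trans (by linarith))]; linarith
    exact Real.rpow_le_rpow ht.le this (by linarith)
  have hm := mul_meas_ge_le_integral_of_nonneg
    (μ := μ) (f := fun x : ℝ => |x| ^ p)
    (Filter.Eventually.of_forall fun x => Real.rpow_nonneg (abs_nonneg x) p) hint (t ^ p)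
  have htp : (0:ℝ) < t ^ p := Real.rpow_pos_of_pos ht p
  have h1 : (μ (Iic (-t))).toReal ≤ (μ {x : ℝ | t ^ p ≤ |x| ^ p}).toReal := by
    apply ENNReal.toReal_mono (measure_ne_top _ _) (measure_mono hsub)
  rw [cdf_eq_real, measureReal_def]
  calc (μ (Iic (-t))).toReal ≤ (μ {x : ℝ | t ^ p ≤ |x| ^ p}).toReal := h1
    _ ≤ V / t ^ p := by
        rw [le_div_iff₀ htp, mul_comm]
        exact hm.trans hle

lemma aux_tail_right {p V : ℝ} (hp : 2 < p) (μ : Measure ℝ) [IsProbabilityMeasure μ]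
    (hint : Integrable (fun x : ℝ => |x| ^ p) μ) (hle : (∫ x, |x| ^ p ∂μ) ≤ V)
    {t : ℝ} (ht : 0 < t) : 1 - cdf μ t ≤ V / t ^ p := by
  have hsub : Ioi t ⊆ {x : ℝ | t ^ p ≤ |x| ^ p} := by
    intro x hx
    simp only [mem_Ioi] at hx
    have : t ≤ |x| := (le_abs_self x).trans' hx.le
    exact Real.rpow_le_rpow ht.le this (by linarith)
  have hm := mul_meas_ge_le_integral_of_nonneg
    (μ := μ) (f := fun x : ℝ => |x| ^ p)
    (Filter.Eventually.of_forall fun x => Real.rpow_nonneg (abs_nonneg x) p) hint (t ^ p)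
  have htp : (0:ℝ) < t ^ p := Real.rpow_pos_of_pos ht p
  have hcompl : μ (Ioi t) = 1 - μ (Iic t) := by
    rw [← compl_Iic, measure_compl measurableSet_Iic (measure_ne_top _ _), measure_univ]
  have h0 : 1 - cdf μ t = (μ (Ioi t)).toReal := by
    rw [hcompl, cdf_eq_real, measureReal_def, ENNReal.toReal_sub_of_le prob_le_one (by simp)]
    simp
  rw [h0]
  calc (μ (Ioi t)).toReal ≤ (μ {x : ℝ | t ^ p ≤ |x| ^ p}).toReal :=
        ENNReal.toReal_mono (measure_ne_top _ _) (measure_mono hsub)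
    _ ≤ V / t ^ p := by
        rw [le_div_iff₀ htp, mul_comm]
        exact hm.trans hle

lemma aux_cdf_measurable (μ : Measure ℝ) : Measurable (fun x => cdf μ x) :=
  (monotone_cdf (μ := μ)).measurable

-- integrability of |cdf μ - cdf ν|
lemma aux_D_integrable {p V : ℝ} (hp : 2 < p) (hV : 0 < V)
    (μ ν : Measure ℝ) [IsProbabilityMeasure μ] [IsProbabilityMeasure ν]
    (hμi : Integrable (fun x : ℝ => |x| ^ p) μ) (hνi : Integrable (fun x : ℝ => |x| ^ p) ν)
    (hμV : (∫ x, |x| ^ p ∂μ) ≤ V) (hνV : (∫ x, |x| ^ p ∂ν) ≤ V) :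
    Integrable (fun x : ℝ => |cdf μ x - cdf ν x|) (volume : Measure ℝ) := by
  have hmble : Measurable (fun x : ℝ => |cdf μ x - cdf ν x|) :=
    ((aux_cdf_measurable μ).sub (aux_cdf_measurable ν)).abs
  have h1 : IntegrableOn (fun x : ℝ => |cdf μ x - cdf ν x|) (Icc (-1) 1) volume := by
    apply Measure.integrableOn_of_bounded (M := 2) (by simp) hmble.aestronglyMeasurable
    refine Filter.Eventually.of_forall fun x => ?_
    rw [Real.norm_eq_abs, abs_abs]
    have h1 := cdf_nonneg (μ := μ) x; have h2 := cdf_le_one (μ := μ) x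
    have h3 := cdf_nonneg (μ := ν) x; have h4 := cdf_le_one (μ := ν) x
    rw [abs_le]; constructor <;> linarith
  have hpow : IntegrableOn (fun x : ℝ => 2 * V * x ^ (-p)) (Ioi 1) volume :=
    ((integrableOn_Ioi_rpow_of_lt (by linarith : -p < -1) one_pos).const_mul (2*V))
  have h2 : IntegrableOn (fun x : ℝ => |cdf μ x - cdf ν x|) (Ioi 1) volume := by
    apply Integrable.mono hpow hmble.aestronglyMeasurable.restrict
    rw [ae_restrict_iff' measurableSet_Ioi]
    refine Filter.Eventually.of_forall fun x hx => ?_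
    have hx0 : (0:ℝ) < x := lt_trans one_pos hx
    have hμt := aux_tail_right hp μ hμi hμV hx0
    have hνt := aux_tail_right hp ν hνi hνV hx0
    have h2' := cdf_le_one (μ := μ) x; have h4 := cdf_le_one (μ := ν) x
    rw [Real.norm_eq_abs, Real.norm_eq_abs, abs_abs]
    have hrw : 2 * V * x ^ (-p) = 2 * (V / x ^ p) := by
      rw [Real.rpow_neg hx0.le]; ring
    have hVx : 0 ≤ V / x ^ p := le_of_lt (div_pos hV (Real.rpow_pos_of_pos hx0 p))
    rw [hrw, abs_of_nonneg (by linarith : (0:ℝ) ≤ 2 * (V / x ^ p)), abs_le]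
    constructor
    · linarith [cdf_nonneg (μ := ν) x]
    · linarith [cdf_nonneg (μ := μ) x]
  have h3 : IntegrableOn (fun x : ℝ => |cdf μ x - cdf ν x|) (Iio (-1)) volume := by
    have hpow2 : IntegrableOn (fun x : ℝ => 2 * V * (-x) ^ (-p)) (Iio (-1)) volume := by
      have := aux_comp_neg (f := fun x : ℝ => Set.indicator (Ioi 1) (fun x => 2 * V * x ^ (-p)) x)
        (by rwa [integrable_indicator_iff measurableSet_Ioi])
      rw [← integrable_indicator_iff (by measurability : MeasurableSet (Iio (-1:ℝ)))]
      have heq : (fun x : ℝ => Set.indicator (Ioi 1) (fun x => 2 * V * x ^ (-p)) (-x))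
          = Set.indicator (Iio (-1)) (fun x : ℝ => 2 * V * (-x) ^ (-p)) := by
        ext x
        by_cases hx : x < -1
        · rw [Set.indicator_of_mem (show -x ∈ Ioi (1:ℝ) by simp only [mem_Ioi]; linarith),
            Set.indicator_of_mem (show x ∈ Iio (-1:ℝ) from hx)]
        · rw [Set.indicator_of_notMem (show -x ∉ Ioi (1:ℝ) by simp only [mem_Ioi, not_lt]; linarith [not_lt.mp hx]),
            Set.indicator_of_notMem (show x ∉ Iio (-1:ℝ) from hx)]
      rwa [heq] at this
    apply Integrable.mono hpow2 hmble.aestronglyMeasurable.restrict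
    rw [ae_restrict_iff' measurableSet_Iio]
    refine Filter.Eventually.of_forall fun x hx => ?_
    have hx0 : (0:ℝ) < -x := by simp only [mem_Iio] at hx; linarith
    have hμt := aux_tail_left hp μ hμi hμV hx0
    have hνt := aux_tail_left hp ν hνi hνV hx0
    rw [neg_neg] at hμt hνt
    rw [Real.norm_eq_abs, Real.norm_eq_abs, abs_abs]
    have hrw : 2 * V * (-x) ^ (-p) = 2 * (V / (-x) ^ p) := by
      rw [Real.rpow_neg hx0.le]; ring
    have hVx : 0 ≤ V / (-x) ^ p := le_of_lt (div_pos hV (Real.rpow_pos_of_pos hx0 p))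
    rw [hrw, abs_of_nonneg (by linarith : (0:ℝ) ≤ 2 * (V / (-x) ^ p)), abs_le]
    constructor
    · linarith [cdf_nonneg (μ := μ) x]
    · linarith [cdf_nonneg (μ := ν) x]
  have hcover : (univ : Set ℝ) = Iio (-1) ∪ (Icc (-1) 1 ∪ Ioi 1) := by
    ext x; simp only [mem_univ, mem_union, mem_Iio, mem_Icc, mem_Ioi, true_iff]
    by_cases h : x < -1
    · left; exact h
    · right; by_cases h2 : x ≤ 1
      · left; exact ⟨not_lt.mp h, h2⟩
      · right; linarith [not_le.mp h2]
  rw [← integrableOn_univ, hcover]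
  exact (h3.union (h1.union h2))


lemma aux_layer (μ : Measure ℝ) [IsProbabilityMeasure μ] {R : ℝ} (hR : 0 < R) :
    ∫ x, min (x^2) (R^2) ∂μ = ∫ t in Ioc 0 (R^2), (μ {x : ℝ | t ≤ x^2}).toReal := by
  have hcont : Continuous (fun x : ℝ => min (x^2) (R^2)) :=
    (continuous_pow 2).min continuous_const
  have hbd : ∀ x : ℝ, min (x^2) (R^2) ≤ R^2 := fun x => min_le_right _ _
  have hnn : ∀ x : ℝ, 0 ≤ min (x^2) (R^2) := fun x => le_min (sq_nonneg x) (sq_nonneg R)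
  have hg_int : Integrable (fun x : ℝ => min (x^2) (R^2)) μ := by
    apply Integrable.mono' (integrable_const (R^2)) hcont.aestronglyMeasurable
    refine Filter.Eventually.of_forall fun x => ?_
    rw [Real.norm_eq_abs, abs_of_nonneg (hnn x)]; exact hbd x
  rw [Integrable.integral_eq_integral_Ioc_meas_le hg_int
    (Filter.Eventually.of_forall hnn) (Filter.Eventually.of_forall hbd)]
  apply setIntegral_congr_fun measurableSet_Ioc
  intro t ht
  have hs : {x : ℝ | t ≤ min (x^2) (R^2)} = {x : ℝ | t ≤ x^2} := by
    ext x
    simp only [mem_setOf_eq, le_min_iff]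
    exact ⟨fun h => h.1, fun h => ⟨h, ht.2⟩⟩
  simp only []
  rw [show {a : ℝ | t ≤ a ^ 2 ⊓ R ^ 2} = {x : ℝ | t ≤ x^2} from hs]
  rfl

lemma aux_S_eq (μ : Measure ℝ) [IsProbabilityMeasure μ] {s : ℝ} (hs : 0 < s)
    (hatom : μ {s} = 0) :
    (μ {x : ℝ | s^2 ≤ x^2}).toReal = cdf μ (-s) + (1 - cdf μ s) := by
  have hset : {x : ℝ | s^2 ≤ x^2} = Iic (-s) ∪ Ici s := by
    ext x
    simp only [mem_setOf_eq, mem_union, mem_Iic, mem_Ici]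
    constructor
    · intro h
      have : s ≤ |x| := by
        have := Real.sqrt_le_sqrt h
        rwa [Real.sqrt_sq hs.le, Real.sqrt_sq_eq_abs] at this
      rcases abs_cases x with ⟨h1, _⟩ | ⟨h1, _⟩
      · right; linarith
      · left; linarith
    · intro h
      rcases h with h | h
      · nlinarith
      · nlinarith
  have hdisj : Disjoint (Iic (-s)) (Ici s) := by
    rw [Iic_disjoint_Ici]; intro h; linarith
  have hIci : μ (Ici s) = μ (Ioi s) := by
    apply le_antisymm
    · calc μ (Ici s) ≤ μ ({s} ∪ Ioi s) := measure_mono (by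
        intro x hx
        rcases eq_or_lt_of_le (mem_Ici.mp hx) with h | h
        · left; simp [← h]
        · right; exact h)
      _ ≤ μ {s} + μ (Ioi s) := measure_union_le _ _
      _ = μ (Ioi s) := by rw [hatom, zero_add]
    · exact measure_mono Ioi_subset_Ici_self
  have hIoi : (μ (Ioi s)).toReal = 1 - cdf μ s := by
    have hcompl : μ (Ioi s) = 1 - μ (Iic s) := by
      rw [← compl_Iic, measure_compl measurableSet_Iic (measure_ne_top _ _), measure_univ]
    rw [hcompl, cdf_eq_real, measureReal_def, ENNReal.toReal_sub_of_le prob_le_one (by simp)]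
    simp
  rw [hset, measure_union hdisj measurableSet_Ici,
    ENNReal.toReal_add (measure_ne_top _ _) (measure_ne_top _ _), hIci, hIoi]
  simp [cdf_eq_real, measureReal_def]

lemma aux_cdf_measurable' (μ : Measure ℝ) : Measurable (fun x => cdf μ x) :=
  (monotone_cdf (μ := μ)).measurable

lemma aux_head {R : ℝ} (hR : 0 < R) (μ ν : Measure ℝ)
    [IsProbabilityMeasure μ] [IsProbabilityMeasure ν]
    (hD : Integrable (fun x : ℝ => |cdf μ x - cdf ν x|) (volume : Measure ℝ)) :
    |(∫ x, min (x^2) (R^2) ∂μ) - ∫ x, min (x^2) (R^2) ∂ν|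
      ≤ 2 * R * ∫ x : ℝ, |cdf μ x - cdf ν x| := by
  set D : ℝ → ℝ := fun x => |cdf μ x - cdf ν x| with hDdef
  have hDmble : Measurable D := ((aux_cdf_measurable' μ).sub (aux_cdf_measurable' ν)).abs
  have hDnn : ∀ x, 0 ≤ D x := fun x => abs_nonneg _
  have hDle2 : ∀ x, D x ≤ 2 := by
    intro x
    have h1 := cdf_nonneg (μ := μ) x; have h2 := cdf_le_one (μ := μ) x
    have h3 := cdf_nonneg (μ := ν) x; have h4 := cdf_le_one (μ := ν) x
    rw [hDdef, abs_le]; constructor <;> linarith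
  set E : ℝ → ℝ := fun s => D (-s) + D s with hEdef
  have hEmble : Measurable E := (hDmble.comp measurable_neg).add hDmble
  have hEnn : ∀ s, 0 ≤ E s := fun s => add_nonneg (hDnn _) (hDnn _)
  have hEle4 : ∀ s, E s ≤ 4 := fun s => by
    have := hDle2 (-s); have := hDle2 s; simp only [hEdef]; linarith
  -- the S functions
  set S : Measure ℝ → ℝ → ℝ := fun κ t => (κ {x : ℝ | t ≤ x^2}).toReal with hSdef
  have hS_anti : ∀ (κ : Measure ℝ) [IsProbabilityMeasure κ], Antitone (S κ) := by
    intro κ hκ a b hab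
    haveI := hκ
    exact ENNReal.toReal_mono (measure_ne_top _ _)
      (measure_mono (fun x hx => le_trans hab hx))
  have hS_le_one : ∀ (κ : Measure ℝ) [IsProbabilityMeasure κ], ∀ t, S κ t ≤ 1 := by
    intro κ hκ t
    exact ENNReal.toReal_le_of_le_ofReal one_pos.le (by simpa using prob_le_one)
  have hS_nn : ∀ (κ : Measure ℝ) (t : ℝ), 0 ≤ S κ t := fun κ t => ENNReal.toReal_nonneg
  have hS_intOn : ∀ (κ : Measure ℝ) [IsProbabilityMeasure κ],
      IntegrableOn (S κ) (Ioc 0 (R^2)) volume := by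
    intro κ hκ
    haveI := hκ
    apply Measure.integrableOn_of_bounded (M := 1) (by simp) ((hS_anti κ).measurable).aestronglyMeasurable
    refine Filter.Eventually.of_forall fun t => ?_
    rw [Real.norm_eq_abs, abs_of_nonneg (hS_nn κ t)]
    exact hS_le_one κ t
  -- difference of integrals
  have key : (∫ x, min (x^2) (R^2) ∂μ) - ∫ x, min (x^2) (R^2) ∂ν
      = ∫ t in Ioc 0 (R^2), (S μ t - S ν t) := by
    rw [aux_layer μ hR, aux_layer ν hR, ← integral_sub (hS_intOn μ) (hS_intOn ν)]
  -- a.e. pointwise bound by E ∘ sqrt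
  have hatoms : (volume : Measure ℝ) ((fun s : ℝ => s^2) ''
      ({a : ℝ | 0 < μ {a}} ∪ {a : ℝ | 0 < ν {a}})) = 0 := by
    apply Set.Countable.measure_zero
    apply Set.Countable.image
    exact (Measure.countable_meas_pos_of_disjoint_iUnion
        (As := fun a : ℝ => {a}) (fun a => measurableSet_singleton a)
        (fun a b hab => by simpa using hab)).union
      (Measure.countable_meas_pos_of_disjoint_iUnion
        (As := fun a : ℝ => {a}) (fun a => measurableSet_singleton a)
        (fun a b hab => by simpa using hab))
  have hae : ∀ᵐ t ∂(volume.restrict (Ioc 0 (R^2))),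
      |S μ t - S ν t| ≤ E (Real.sqrt t) := by
    rw [ae_restrict_iff' measurableSet_Ioc]
    have hN := hatoms
    rw [← compl_mem_ae_iff] at hN
    filter_upwards [hN] with t htN ht
    set s := Real.sqrt t with hsdef
    have hs : 0 < s := Real.sqrt_pos.mpr ht.1
    have hst : s^2 = t := Real.sq_sqrt ht.1.le
    have hsatom : s ∉ ({a : ℝ | 0 < μ {a}} ∪ {a : ℝ | 0 < ν {a}}) := by
      intro hmem
      exact htN ⟨s, hmem, hst⟩
    simp only [mem_union, mem_setOf_eq, not_or, not_lt] at hsatom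
    have hμa : μ {s} = 0 := le_antisymm hsatom.1 zero_le
    have hνa : ν {s} = 0 := le_antisymm hsatom.2 zero_le
    have h1 : S μ t = cdf μ (-s) + (1 - cdf μ s) := by
      rw [hSdef, ← hst]; exact aux_S_eq μ hs hμa
    have h2 : S ν t = cdf ν (-s) + (1 - cdf ν s) := by
      rw [hSdef, ← hst]; exact aux_S_eq ν hs hνa
    rw [h1, h2]
    have : cdf μ (-s) + (1 - cdf μ s) - (cdf ν (-s) + (1 - cdf ν s))
        = (cdf μ (-s) - cdf ν (-s)) - (cdf μ s - cdf ν s) := by ring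
    rw [this]
    calc |(cdf μ (-s) - cdf ν (-s)) - (cdf μ s - cdf ν s)|
        ≤ |cdf μ (-s) - cdf ν (-s)| + |cdf μ s - cdf ν s| := abs_sub _ _
      _ = E s := rfl
  -- integrability of E ∘ sqrt on Ioc
  have hEsq_int : IntegrableOn (fun t => E (Real.sqrt t)) (Ioc 0 (R^2)) volume := by
    have hm : Measurable (fun t : ℝ => E (Real.sqrt t)) :=
      hEmble.comp Real.continuous_sqrt.measurable
    apply Measure.integrableOn_of_bounded (M := 4) (by simp) hm.aestronglyMeasurable
    refine Filter.Eventually.of_forall fun t => ?_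
    rw [Real.norm_eq_abs, abs_of_nonneg (hEnn _)]
    exact hEle4 _
  have step1 : |∫ t in Ioc 0 (R^2), (S μ t - S ν t)| ≤ ∫ t in Ioc 0 (R^2), E (Real.sqrt t) := by
    calc |∫ t in Ioc 0 (R^2), (S μ t - S ν t)|
        ≤ ∫ t in Ioc 0 (R^2), |S μ t - S ν t| := by
          simpa [Real.norm_eq_abs] using
            norm_integral_le_integral_norm (μ := volume.restrict (Ioc 0 (R^2)))
              (f := fun t => S μ t - S ν t)
      _ ≤ ∫ t in Ioc 0 (R^2), E (Real.sqrt t) :=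
          integral_mono_ae (((hS_intOn μ).sub (hS_intOn ν)).abs) hEsq_int hae
  -- substitution t = s^2
  have himg : (fun s : ℝ => s^2) '' (Ioc 0 R) = Ioc 0 (R^2) := by
    ext u
    simp only [mem_image, mem_Ioc]
    constructor
    · rintro ⟨s, ⟨hs0, hsR⟩, rfl⟩
      exact ⟨by positivity, by nlinarith⟩
    · rintro ⟨hu0, huR⟩
      refine ⟨Real.sqrt u, ⟨Real.sqrt_pos.mpr hu0, ?_⟩, Real.sq_sqrt hu0.le⟩
      calc Real.sqrt u ≤ Real.sqrt (R^2) := Real.sqrt_le_sqrt huR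
        _ = R := Real.sqrt_sq hR.le
  have hderiv : ∀ s ∈ Ioc 0 R, HasDerivWithinAt (fun s : ℝ => s^2) (2*s) (Ioc 0 R) s := by
    intro s _
    simpa using (hasDerivAt_pow 2 s).hasDerivWithinAt
  have hinj : InjOn (fun s : ℝ => s^2) (Ioc 0 R) := by
    intro a ha b hb hab
    simp only at hab
    nlinarith [ha.1, hb.1]
  have hsub : ∫ t in Ioc 0 (R^2), E (Real.sqrt t)
      = ∫ s in Ioc 0 R, (2*s) * E s := by
    rw [← himg, integral_image_eq_integral_abs_deriv_smul measurableSet_Ioc hderiv hinj]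
    apply setIntegral_congr_fun measurableSet_Ioc
    intro s hs
    have h1 : Real.sqrt (s^2) = s := Real.sqrt_sq hs.1.le
    have h2 : |2*s| = 2*s := abs_of_nonneg (by linarith [hs.1])
    simp [h1, h2]
  -- bound 2s ≤ 2R
  have hE_intOn : ∀ c : ℝ, IntegrableOn (fun s => c * E s) (Ioc 0 R) volume := by
    intro c
    apply Measure.integrableOn_of_bounded (M := |c| * 4) (by simp)
      ((hEmble.const_mul c).aestronglyMeasurable)
    refine Filter.Eventually.of_forall fun s => ?_
    rw [Real.norm_eq_abs, abs_mul]
    exact mul_le_mul_of_nonneg_left (by rw [abs_of_nonneg (hEnn s)]; exact hEle4 s) (abs_nonneg c)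
  have h2s_int : IntegrableOn (fun s => (2*s) * E s) (Ioc 0 R) volume := by
    have hm2 : Measurable (fun s : ℝ => (2*s) * E s) := by
      exact ((measurable_const.mul measurable_id).mul hEmble)
    apply Measure.integrableOn_of_bounded (M := 2*R*4) (by simp) hm2.aestronglyMeasurable
    rw [ae_restrict_iff' measurableSet_Ioc]
    refine Filter.Eventually.of_forall fun s hs => ?_
    rw [Real.norm_eq_abs, abs_mul, abs_of_nonneg (hEnn s),
      abs_of_nonneg (by linarith [hs.1] : (0:ℝ) ≤ 2*s)]
    apply mul_le_mul (by linarith [hs.2]) (hEle4 s) (hEnn s) (by linarith)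
  have step2 : ∫ s in Ioc 0 R, (2*s) * E s ≤ ∫ s in Ioc 0 R, (2*R) * E s := by
    apply setIntegral_mono_on h2s_int (hE_intOn (2*R)) measurableSet_Ioc
    intro s hs
    exact mul_le_mul_of_nonneg_right (by linarith [hs.2]) (hEnn s)
  -- final assembly for E integral
  have step3 : ∫ s in Ioc 0 R, (2*R) * E s ≤ 2 * R * ∫ x : ℝ, D x := by
    rw [integral_const_mul]
    apply mul_le_mul_of_nonneg_left _ (by linarith)
    have hDneg_int : Integrable (fun s : ℝ => D (-s)) volume := by
      have A : MeasurableEmbedding (fun x : ℝ => -x) :=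
        (Homeomorph.neg ℝ).isClosedEmbedding.measurableEmbedding
      have := hD
      rw [← Measure.map_neg_eq_self (volume : Measure ℝ)] at this
      exact (A.integrable_map_iff).mp this
    have hsplit : ∫ s in Ioc 0 R, E s
        = (∫ s in Ioc 0 R, D (-s)) + ∫ s in Ioc 0 R, D s := by
      exact integral_add (hDneg_int.integrableOn) (hD.integrableOn)
    rw [hsplit]
    have hb1 : ∫ s in Ioc 0 R, D (-s) ≤ ∫ s in Ioi 0, D (-s) := by
      apply setIntegral_mono_set hDneg_int.integrableOn
        (Filter.Eventually.of_forall fun s => hDnn (-s))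
        (HasSubset.Subset.eventuallyLE Ioc_subset_Ioi_self)
    have hb2 : ∫ s in Ioc 0 R, D s ≤ ∫ s in Ioi 0, D s := by
      apply setIntegral_mono_set hD.integrableOn
        (Filter.Eventually.of_forall fun s => hDnn s)
        (HasSubset.Subset.eventuallyLE Ioc_subset_Ioi_self)
    have hneg : ∫ s in Ioi 0, D (-s) = ∫ s in Iic 0, D s := by
      rw [integral_comp_neg_Ioi]; norm_num
    have hfull : (∫ s in Iic 0, D s) + ∫ s in Ioi 0, D s = ∫ x : ℝ, D x := by
      rw [← compl_Iic]
      exact integral_add_compl measurableSet_Iic hD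
    linarith
  rw [key]
  calc |∫ t in Ioc 0 (R^2), (S μ t - S ν t)| ≤ ∫ t in Ioc 0 (R^2), E (Real.sqrt t) := step1
    _ = ∫ s in Ioc 0 R, (2*s) * E s := hsub
    _ ≤ ∫ s in Ioc 0 R, (2*R) * E s := step2
    _ ≤ 2 * R * ∫ x : ℝ, D x := step3


section
variable {p V R : ℝ}

lemma aux_sq_int (μ : Measure ℝ) [IsProbabilityMeasure μ] (hp : 2 < p)
    (hint : Integrable (fun x : ℝ => |x| ^ p) μ) :
    Integrable (fun x : ℝ => x^2) μ := by
  apply Integrable.mono' ((integrable_const 1).add hint)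
    (continuous_pow 2).measurable.aestronglyMeasurable
  refine Filter.Eventually.of_forall fun x => ?_
  rw [Real.norm_eq_abs, abs_of_nonneg (sq_nonneg x)]
  simp only [Pi.add_apply]
  rcases le_or_gt (|x|) 1 with h | h
  · have h1 : x^2 ≤ 1 := by nlinarith [abs_nonneg x, sq_abs x]
    have h2 : (0:ℝ) ≤ |x| ^ p := Real.rpow_nonneg (abs_nonneg x) p
    linarith
  · have h1 : x^2 = |x| ^ (2:ℝ) := by
      rw [show ((2:ℝ)) = ((2:ℕ):ℝ) by norm_num, Real.rpow_natCast, sq_abs]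
    have h2 : |x| ^ (2:ℝ) ≤ |x| ^ p :=
      Real.rpow_le_rpow_of_exponent_le h.le (by linarith)
    linarith
end

lemma aux_tail_trunc {p V R : ℝ} (hp : 2 < p) (hR : 0 < R)
    (μ : Measure ℝ) [IsProbabilityMeasure μ]
    (hint : Integrable (fun x : ℝ => |x| ^ p) μ) (hle : (∫ x, |x| ^ p ∂μ) ≤ V) :
    0 ≤ (∫ x, x^2 ∂μ) - ∫ x, min (x^2) (R^2) ∂μ ∧
    (∫ x, x^2 ∂μ) - ∫ x, min (x^2) (R^2) ∂μ ≤ V / R ^ (p-2) := by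
  have hRp : (0:ℝ) < R ^ (p-2) := Real.rpow_pos_of_pos hR _
  have hx2 := aux_sq_int μ hp hint
  have hcont : Continuous (fun x : ℝ => min (x^2) (R^2)) :=
    (continuous_pow 2).min continuous_const
  have hg_int : Integrable (fun x : ℝ => min (x^2) (R^2)) μ := by
    apply Integrable.mono' (integrable_const (R^2)) hcont.aestronglyMeasurable
    refine Filter.Eventually.of_forall fun x => ?_
    rw [Real.norm_eq_abs, abs_of_nonneg (le_min (sq_nonneg x) (sq_nonneg R))]
    exact min_le_right _ _
  rw [← integral_sub hx2 hg_int]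
  constructor
  · apply integral_nonneg
    intro x
    simp only [Pi.zero_apply, sub_nonneg]
    exact min_le_left _ _
  · have hbd : ∀ x : ℝ, x^2 - min (x^2) (R^2) ≤ |x| ^ p / R ^ (p-2) := by
      intro x
      rcases le_or_gt (|x|) R with h | h
      · have : x^2 ≤ R^2 := by nlinarith [abs_nonneg x, sq_abs x]
        rw [min_eq_left this]
        simp only [sub_self]
        positivity
      · have hxx : R^2 ≤ x^2 := by nlinarith [sq_abs x, hR]
        rw [min_eq_right hxx]
        have hx0 : (0:ℝ) < |x| := lt_trans hR h
        have h1 : x^2 ≤ |x| ^ p / R ^ (p-2) := by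
          rw [le_div_iff₀ hRp]
          have e1 : |x| ^ p = |x| ^ (2:ℝ) * |x| ^ (p-2) := by
            rw [← Real.rpow_add hx0]; norm_num
          have e2 : x^2 = |x| ^ (2:ℝ) := by
            rw [show ((2:ℝ)) = ((2:ℕ):ℝ) by norm_num, Real.rpow_natCast, sq_abs]
          rw [e1, ← e2]
          apply mul_le_mul_of_nonneg_left _ (sq_nonneg x)
          exact Real.rpow_le_rpow hR.le h.le (by linarith)
        nlinarith [sq_nonneg R]
    calc ∫ x, (x^2 - min (x^2) (R^2)) ∂μ ≤ ∫ x, |x| ^ p / R ^ (p-2) ∂μ :=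
          integral_mono (hx2.sub hg_int) (hint.div_const _) hbd
      _ = (∫ x, |x| ^ p ∂μ) / R ^ (p-2) := integral_div _ _
      _ ≤ V / R ^ (p-2) := by
          apply div_le_div_of_nonneg_right hle hRp.le

lemma aux_part1 (p V : ℝ) (hp : 2 < p) (hV : 0 < V) (μ ν : Measure ℝ)
    [IsProbabilityMeasure μ] [IsProbabilityMeasure ν]
    (hμi : Integrable (fun x : ℝ => |x| ^ p) μ) (hνi : Integrable (fun x : ℝ => |x| ^ p) ν)
    (hμV : (∫ x, |x| ^ p ∂μ) ≤ V) (hνV : (∫ x, |x| ^ p ∂ν) ≤ V)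
    {R : ℝ} (hR : 0 < R) :
    |(∫ x, x ^ 2 ∂μ) - ∫ x, x ^ 2 ∂ν|
      ≤ 2 * R * (∫ x : ℝ, |cdf μ x - cdf ν x|) + 2 * V / R ^ (p - 2) := by
  have hD := aux_D_integrable hp hV μ ν hμi hνi hμV hνV
  have hhead := aux_head hR μ ν hD
  obtain ⟨hμ0, hμ1⟩ := aux_tail_trunc hp hR μ hμi hμV
  obtain ⟨hν0, hν1⟩ := aux_tail_trunc hp hR ν hνi hνV
  obtain ⟨ha1, ha2⟩ := abs_le.mp hhead
  have h2V : 2 * V / R ^ (p-2) = V / R^(p-2) + V / R^(p-2) := by ring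
  have hiden : (∫ x, x ^ 2 ∂μ) - ∫ x, x ^ 2 ∂ν
      = ((∫ x, min (x^2) (R^2) ∂μ) - ∫ x, min (x^2) (R^2) ∂ν)
        + ((∫ x, x^2 ∂μ) - ∫ x, min (x^2) (R^2) ∂μ)
        - ((∫ x, x^2 ∂ν) - ∫ x, min (x^2) (R^2) ∂ν) := by ring
  rw [hiden, abs_le]
  constructor <;> [skip; skip] <;> linarith

theorem stmt_14 (p V : ℝ) (hp : 2 < p) (hV : 0 < V) :
    (∀ (μ ν : Measure ℝ), IsProbabilityMeasure μ → IsProbabilityMeasure ν →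
      Integrable (fun x : ℝ => |x| ^ p) μ → Integrable (fun x : ℝ => |x| ^ p) ν →
      (∫ x, |x| ^ p ∂μ) ≤ V → (∫ x, |x| ^ p ∂ν) ≤ V →
      ∀ R : ℝ, 0 < R →
        |(∫ x, x ^ 2 ∂μ) - ∫ x, x ^ 2 ∂ν|
          ≤ 2 * R * (∫ x : ℝ, |cdf μ x - cdf ν x|) + 2 * V / R ^ (p - 2)) ∧
    (∃ C : ℝ, 0 < C ∧
      ∀ (μ ν : Measure ℝ), IsProbabilityMeasure μ → IsProbabilityMeasure ν →
        Integrable (fun x : ℝ => |x| ^ p) μ → Integrable (fun x : ℝ => |x| ^ p) ν →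
        (∫ x, |x| ^ p ∂μ) ≤ V → (∫ x, |x| ^ p ∂ν) ≤ V →
        |(∫ x, x ^ 2 ∂μ) - ∫ x, x ^ 2 ∂ν|
          ≤ C * (∫ x : ℝ, |cdf μ x - cdf ν x|) ^ ((p - 2) / (p - 1))) := by
  have hp2 : p - 2 ≠ 0 := sub_ne_zero.mpr (by linarith)
  have hp1 : p - 1 ≠ 0 := sub_ne_zero.mpr (by linarith)
  constructor
  · intro μ ν hμ hν hμi hνi hμV hνV R hR
    haveI := hμ; haveI := hν
    exact aux_part1 p V hp hV μ ν hμi hνi hμV hνV hR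
  · refine ⟨2 + 2*V, by linarith, ?_⟩
    intro μ ν hμ hν hμi hνi hμV hνV
    haveI := hμ; haveI := hν
    set W := ∫ x : ℝ, |cdf μ x - cdf ν x| with hWdef
    have hWnn : 0 ≤ W := integral_nonneg fun x => abs_nonneg _
    rcases eq_or_lt_of_le hWnn with hW0 | hWpos
    · -- W = 0 case
      have hzero : |(∫ x, x ^ 2 ∂μ) - ∫ x, x ^ 2 ∂ν| ≤ 0 := by
        apply le_of_forall_pos_le_add
        intro ε hε
        have h2Vε : (0:ℝ) < 2*V/ε := by positivity
        set R : ℝ := (2*V/ε) ^ ((p-2)⁻¹) with hRdef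
        have hR : 0 < R := Real.rpow_pos_of_pos h2Vε _
        have hRp : R ^ (p-2) = 2*V/ε := by
          rw [hRdef, ← Real.rpow_mul h2Vε.le, inv_mul_cancel₀ hp2, Real.rpow_one]
        have := aux_part1 p V hp hV μ ν hμi hνi hμV hνV hR
        rw [← hWdef, ← hW0, mul_zero, zero_add] at this
        rw [hRp] at this
        have heq : 2 * V / (2 * V / ε) = ε := by
          rw [div_div_eq_mul_div, mul_comm, mul_div_assoc, div_self (by positivity : (2:ℝ)*V ≠ 0), mul_one]
        rw [heq] at this
        linarith
      rw [← hW0, Real.zero_rpow (by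
        intro h
        rw [div_eq_zero_iff] at h
        rcases h with h | h <;> [exact hp2 h; exact hp1 h]), mul_zero]
      exact hzero
    · -- W > 0 case
      set R : ℝ := W ^ (-(1/(p-1))) with hRdef
      have hR : 0 < R := Real.rpow_pos_of_pos hWpos _
      have hbound := aux_part1 p V hp hV μ ν hμi hνi hμV hνV hR
      rw [← hWdef] at hbound
      have hRW : R * W = W ^ ((p-2)/(p-1)) := by
        have h1 : R * W = W ^ (-(1/(p-1))) * W ^ (1:ℝ) := by rw [Real.rpow_one]
        rw [h1, ← Real.rpow_add hWpos]
        congr 1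
        field_simp
        ring
      have hRp : R ^ (p-2) = W ^ (-((p-2)/(p-1))) := by
        rw [hRdef, ← Real.rpow_mul hWnn]
        congr 1
        field_simp
      have hVterm : 2 * V / R ^ (p-2) = 2 * V * W ^ ((p-2)/(p-1)) := by
        rw [hRp, Real.rpow_neg hWnn]
        field_simp
      calc |(∫ x, x ^ 2 ∂μ) - ∫ x, x ^ 2 ∂ν|
          ≤ 2 * R * W + 2 * V / R ^ (p - 2) := hbound
        _ = (2 + 2*V) * W ^ ((p-2)/(p-1)) := by
            rw [hVterm, show 2 * R * W = 2 * (R * W) by ring, hRW]; ring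
end
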